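/- Let X be a random vector in ℝ^d with E[X] = g, E[‖X − g‖²] ≤ σ², and ‖g‖ ≤ λ/2. Define X̃ = clip(X, λ). Then E[‖X̃ − g‖²] ≤ 18σ² and E[‖X̃ − E[X̃]‖²] ≤ 18σ². -/

import Mathlib

open MeasureTheory

/-- Clipping operator: `clip x λ = min{1, λ/‖x‖} • x` (with `clip 0 λ = 0`). -/
noncomputable def clip {E : Type*} [NormedAddCommGroup E] [InnerProductSpace ℝ E]
    (x : E) (lam : ℝ) : E := (min 1 (lam / ‖x‖)) • x

lemma clip_eq_self {E : Type*} [NormedAddCommGroup E] [InnerProductSpace ℝ E]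
    {x : E} {lam : ℝ} (hx : ‖x‖ ≤ lam) : clip x lam = x := by
  rcases eq_or_ne x 0 with h | h
  · simp [clip, h]
  · have hpos : 0 < ‖x‖ := norm_pos_iff.2 h
    have : (1 : ℝ) ≤ lam / ‖x‖ := (one_le_div hpos).2 hx
    simp [clip, min_eq_left this]

lemma norm_clip_le {E : Type*} [NormedAddCommGroup E] [InnerProductSpace ℝ E]
    (x : E) {lam : ℝ} (hlam : 0 < lam) : ‖clip x lam‖ ≤ lam := by
  rcases le_or_gt ‖x‖ lam with h | h
  · rw [clip_eq_self h]; exact h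
  · have hpos : 0 < ‖x‖ := lt_trans hlam h
    have h1 : lam / ‖x‖ ≤ 1 := (div_le_one hpos).2 h.le
    have h2 : 0 ≤ lam / ‖x‖ := div_nonneg hlam.le hpos.le
    rw [clip, norm_smul, min_eq_right h1, Real.norm_of_nonneg h2,
      div_mul_cancel₀ _ hpos.ne']

lemma clip_sub_sq_le {E : Type*} [NormedAddCommGroup E] [InnerProductSpace ℝ E]
    (x g : E) {lam : ℝ} (hlam : 0 < lam) (hg : ‖g‖ ≤ lam / 2) :
    ‖clip x lam - g‖ ^ 2 ≤ 9 * ‖x - g‖ ^ 2 := by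
  rcases le_or_gt ‖x‖ lam with h | h
  · rw [clip_eq_self h]; nlinarith [sq_nonneg ‖x - g‖]
  · have h1 : ‖clip x lam - g‖ ≤ lam + lam / 2 :=
      (norm_sub_le _ _).trans (add_le_add (norm_clip_le x hlam) hg)
    have h2 : lam / 2 ≤ ‖x - g‖ := by
      have habs : ‖x‖ - ‖g‖ ≤ ‖x - g‖ := norm_sub_norm_le x g
      linarith
    nlinarith [norm_nonneg (clip x lam - g)]

/-- Gorbunov et al. Lemma F.5, variance form: if `E[X] = g`, `E[‖X − g‖²] ≤ σ²`
and `‖g‖ ≤ λ/2`, then `E[‖clip(X,λ) − g‖²] ≤ 18σ²` and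
`E[‖clip(X,λ) − E[clip(X,λ)]‖²] ≤ 18σ²`. -/
theorem clipping_variance_of_bounded_variance {d : ℕ} {Ω : Type*} [MeasurableSpace Ω]
    (μ : Measure Ω) [IsProbabilityMeasure μ]
    (X : Ω → EuclideanSpace ℝ (Fin d)) (hX : Measurable X) (hXint : Integrable X μ)
    (g : EuclideanSpace ℝ (Fin d)) (σ lam : ℝ) (hσ : 0 ≤ σ) (hlam : 0 < lam)
    (hmean : ∫ ω, X ω ∂μ = g)
    (hvarInt : Integrable (fun ω => ‖X ω - g‖ ^ 2) μ)
    (hvar : ∫ ω, ‖X ω - g‖ ^ 2 ∂μ ≤ σ ^ 2)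
    (hg : ‖g‖ ≤ lam / 2) :
    (∫ ω, ‖clip (X ω) lam - g‖ ^ 2 ∂μ ≤ 18 * σ ^ 2) ∧
    (∫ ω, ‖clip (X ω) lam - ∫ ω', clip (X ω') lam ∂μ‖ ^ 2 ∂μ ≤ 18 * σ ^ 2) := by
  set Y : Ω → EuclideanSpace ℝ (Fin d) := fun ω => clip (X ω) lam with hY
  have hYmeas : Measurable Y := by
    refine Measurable.smul (f := fun ω => min 1 (lam / ‖X ω‖)) (g := X) ?_ ?_
    · exact (measurable_const.min (measurable_const.div hX.norm))
    · exact hX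
  have hYbdd : ∀ ω, ‖Y ω‖ ≤ lam := fun ω => norm_clip_le _ hlam
  have hYint : Integrable Y μ := by
    refine (integrable_const lam).mono' hYmeas.aestronglyMeasurable ?_
    exact Filter.Eventually.of_forall hYbdd
  have hptwise : ∀ ω, ‖Y ω - g‖ ^ 2 ≤ 9 * ‖X ω - g‖ ^ 2 :=
    fun ω => clip_sub_sq_le (X ω) g hlam hg
  have hYsqmeas : AEStronglyMeasurable (fun ω => ‖Y ω - g‖ ^ 2) μ :=
    ((hYmeas.sub measurable_const).norm.pow measurable_const).aestronglyMeasurable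
  have hYsqint : Integrable (fun ω => ‖Y ω - g‖ ^ 2) μ := by
    refine (hvarInt.const_mul 9).mono' hYsqmeas ?_
    refine Filter.Eventually.of_forall fun ω => ?_
    rw [Real.norm_of_nonneg (by positivity)]
    exact hptwise ω
  have key : ∫ ω, ‖Y ω - g‖ ^ 2 ∂μ ≤ 9 * σ ^ 2 := by
    calc ∫ ω, ‖Y ω - g‖ ^ 2 ∂μ ≤ ∫ ω, 9 * ‖X ω - g‖ ^ 2 ∂μ :=
          integral_mono hYsqint (hvarInt.const_mul 9) hptwise
      _ = 9 * ∫ ω, ‖X ω - g‖ ^ 2 ∂μ := integral_const_mul 9 _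
      _ ≤ 9 * σ ^ 2 := by linarith
  have hfirst : ∫ ω, ‖Y ω - g‖ ^ 2 ∂μ ≤ 18 * σ ^ 2 := by nlinarith
  refine ⟨hfirst, ?_⟩
  set m : EuclideanSpace ℝ (Fin d) := ∫ ω', Y ω' ∂μ with hm
  -- bias-variance: ∫ ‖Y - m‖² = ∫ ‖Y - g‖² - ‖m - g‖²
  have hYgint : Integrable (fun ω => Y ω - g) μ := hYint.sub (integrable_const g)
  have hinner : ∀ ω, ‖Y ω - m‖ ^ 2 =
      ‖Y ω - g‖ ^ 2 - 2 * inner ℝ (m - g) (Y ω - g) + ‖m - g‖ ^ 2 := by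
    intro ω
    have : Y ω - m = (Y ω - g) - (m - g) := by abel
    rw [this, @norm_sub_sq_real]
    rw [real_inner_comm]
  have hinnerint : Integrable (fun ω => inner ℝ (m - g) (Y ω - g) : Ω → ℝ) μ :=
    hYgint.const_inner _
  have hintinner : ∫ ω, (inner ℝ (m - g) (Y ω - g) : ℝ) ∂μ = ‖m - g‖ ^ 2 := by
    rw [integral_inner hYgint, integral_sub hYint (integrable_const g),
      integral_const, probReal_univ, one_smul, ← hm,
      real_inner_self_eq_norm_sq]
  have hexp : ∫ ω, ‖Y ω - m‖ ^ 2 ∂μ = ∫ ω, ‖Y ω - g‖ ^ 2 ∂μ - ‖m - g‖ ^ 2 := by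
    calc ∫ ω, ‖Y ω - m‖ ^ 2 ∂μ
        = ∫ ω, (‖Y ω - g‖ ^ 2 - 2 * inner ℝ (m - g) (Y ω - g) + ‖m - g‖ ^ 2) ∂μ := by
          exact integral_congr_ae (Filter.Eventually.of_forall hinner)
      _ = ∫ ω, ‖Y ω - g‖ ^ 2 ∂μ - 2 * ∫ ω, (inner ℝ (m - g) (Y ω - g) : ℝ) ∂μ
            + ‖m - g‖ ^ 2 := by
          have h1 : Integrable
              (fun ω => ‖Y ω - g‖ ^ 2 - 2 * inner ℝ (m - g) (Y ω - g) : Ω → ℝ) μ :=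
            hYsqint.sub (hinnerint.const_mul 2)
          rw [integral_add h1 (integrable_const _),
            integral_sub hYsqint (hinnerint.const_mul 2), integral_const_mul,
            integral_const, probReal_univ, smul_eq_mul, one_mul]
      _ = ∫ ω, ‖Y ω - g‖ ^ 2 ∂μ - ‖m - g‖ ^ 2 := by rw [hintinner]; ring
  have : ∫ ω, ‖Y ω - m‖ ^ 2 ∂μ ≤ ∫ ω, ‖Y ω - g‖ ^ 2 ∂μ := by
    rw [hexp]; nlinarith [sq_nonneg ‖m - g‖]
  calc ∫ ω, ‖Y ω - m‖ ^ 2 ∂μ ≤ ∫ ω, ‖Y ω - g‖ ^ 2 ∂μ := this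
    _ ≤ 18 * σ ^ 2 := hfirst
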